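/- For unit vectors z, n in ℝ³ with zᵀn ≠ -1, the angle error V = 1 - zᵀn satisfies V̇ = -k‖z × n‖² ≤ 0 when ż = ω × z with ω = ω_n + k (z × n) + λ z, where ω_n = n × ṅ; hence V is non-increasing along the flow. -/

import Mathlib

open scoped InnerProductSpace

noncomputable def cross3 (u v : EuclideanSpace ℝ (Fin 3)) : EuclideanSpace ℝ (Fin 3) :=
  (WithLp.equiv 2 (Fin 3 → ℝ)).symm
    ![u 1 * v 2 - u 2 * v 1, u 2 * v 0 - u 0 * v 2, u 0 * v 1 - u 1 * v 0]

lemma cross3_key (a b c : EuclideanSpace ℝ (Fin 3)) (k l : ℝ) :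
    ⟪cross3 (cross3 a b + k • cross3 c a + l • c) c, a⟫_ℝ
      + ⟪c, cross3 (cross3 a b) a⟫_ℝ = k * ‖cross3 c a‖^2 := by
  rw [← real_inner_self_eq_norm_sq]
  simp only [cross3, PiLp.inner_apply, RCLike.inner_apply, conj_trivial,
    Fin.sum_univ_three, WithLp.equiv_symm_apply, PiLp.toLp_apply, PiLp.add_apply, PiLp.smul_apply,
    smul_eq_mul, Matrix.cons_val_zero, Matrix.cons_val_one, Matrix.head_cons,
    Matrix.cons_val_two, Matrix.tail_cons]
  ring

/-- For unit curves z, n with zᵀn ≠ -1, and closed-loop dynamics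
ż = ω × z with ω = ω_n + k (z × n) + λ z, ω_n = n × ṅ, the error V = 1 - zᵀn
satisfies V̇ = -k‖z × n‖² ≤ 0 at every time, and V is non-increasing. -/
theorem stmt0
    (z n : ℝ → EuclideanSpace ℝ (Fin 3)) (z' n' : ℝ → EuclideanSpace ℝ (Fin 3))
    (k : ℝ) (lam : ℝ → ℝ)
    (hk : 0 < k) (hlam : Continuous lam)
    (hz : ∀ t, HasDerivAt z (z' t) t) (hn : ∀ t, HasDerivAt n (n' t) t)
    (hzu : ∀ t, ‖z t‖ = 1) (hnu : ∀ t, ‖n t‖ = 1)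
    (hne : ∀ t, ⟪z t, n t⟫_ℝ ≠ -1)
    (hndyn : ∀ t, n' t = cross3 (cross3 (n t) (n' t)) (n t))
    (hzdyn : ∀ t, z' t =
      cross3 (cross3 (n t) (n' t) + k • cross3 (z t) (n t) + lam t • z t) (z t)) :
    (∀ t, HasDerivAt (fun s => 1 - ⟪z s, n s⟫_ℝ) (-(k * ‖cross3 (z t) (n t)‖ ^ 2)) t) ∧
    (∀ t, -(k * ‖cross3 (z t) (n t)‖ ^ 2) ≤ 0) ∧
    Antitone (fun s => 1 - ⟪z s, n s⟫_ℝ) := by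
  have hderiv : ∀ t, HasDerivAt (fun s => 1 - ⟪z s, n s⟫_ℝ)
      (-(k * ‖cross3 (z t) (n t)‖ ^ 2)) t := by
    intro t
    have h1 : HasDerivAt (fun s => ⟪z s, n s⟫_ℝ)
        (⟪z t, n' t⟫_ℝ + ⟪z' t, n t⟫_ℝ) t := (hz t).inner ℝ (hn t)
    have h2 := (hasDerivAt_const t (1 : ℝ)).sub h1
    refine h2.congr_deriv ?_
    have := cross3_key (n t) (n' t) (z t) k (lam t)
    rw [← hzdyn t, ← hndyn t] at this
    rw [← this]; ring
  have hle : ∀ t, -(k * ‖cross3 (z t) (n t)‖ ^ 2) ≤ 0 := by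
    intro t
    have : 0 ≤ k * ‖cross3 (z t) (n t)‖ ^ 2 :=
      mul_nonneg hk.le (by positivity)
    linarith
  refine ⟨hderiv, hle, ?_⟩
  apply antitone_of_deriv_nonpos
  · exact fun t => (hderiv t).differentiableAt
  · intro t
    rw [(hderiv t).deriv]
    exact hle t
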